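/- Let Q≥2 be an integer, let X and Y be finite sets, and let p be a subdistribution on X×[Q]. Let K^Π(x,y) (x∈X, y∈Y, Π a permutation of [Q]) be nonnegative numbers with Σ_{y∈Y}Σ_Π K^Π(x,y)=1 for every x∈X, and let K̂ be the Markov kernel from X×[Q] to Y×[Q] defined by K̂((x,b),(y,c)) = Σ_{Π:Π(b)=c} K^Π(x,y). Then: (i) A_Y(pK̂) ≥ A_X(p), where (pK̂)(y,c)=Σ_{(x,b)}p(x,b)K̂((x,b),(y,c)); and (ii) if p=p₁+p₂ pointwise for subdistributions p₁,p₂ on X×[Q], then A_X(p) ≥ A_X(p₁)+A_X(p₂). -/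
import Mathlib


noncomputable section

/-- Ambiguity functional of a subdistribution `p` on `X × [Q]`:
`A_X(p) = Σ_x (Σ_b p(x,b) − max_b p(x,b))`. -/
def ambig {X : Type} [Fintype X] {Q : ℕ} (p : X × Fin Q → ℝ) : ℝ :=
  ∑ x : X, ((∑ b : Fin Q, p (x, b)) - ⨆ b : Fin Q, p (x, b))

/-- Push-forward of `p` through the label-lifted Markov kernel
`K̂((x,b),(y,c)) = Σ_{Π : Π(b)=c} K^Π(x,y)`. -/
def pushLift {X Y : Type} [Fintype X] {Q : ℕ}
    (K : Equiv.Perm (Fin Q) → X → Y → ℝ) (p : X × Fin Q → ℝ) : Y × Fin Q → ℝ :=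
  fun q => ∑ x : X, ∑ b : Fin Q,
    p (x, b) * ∑ g : Equiv.Perm (Fin Q), if g b = q.2 then K g x q.1 else 0

/-- Ambiguity monotonicity under permutation kernels, and superadditivity of ambiguity. -/
theorem stmt4 (Q : ℕ) (hQ : 2 ≤ Q) (X Y : Type) [Fintype X] [Fintype Y]
    (p : X × Fin Q → ℝ) (hp0 : ∀ z, 0 ≤ p z) (hp1 : ∑ z, p z ≤ 1)
    (K : Equiv.Perm (Fin Q) → X → Y → ℝ)
    (hK0 : ∀ g x y, 0 ≤ K g x y)
    (hK1 : ∀ x : X, ∑ y : Y, ∑ g : Equiv.Perm (Fin Q), K g x y = 1) :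
    ambig p ≤ ambig (pushLift K p) ∧
      ∀ p₁ p₂ : X × Fin Q → ℝ,
        (∀ z, 0 ≤ p₁ z) → (∑ z, p₁ z ≤ 1) →
        (∀ z, 0 ≤ p₂ z) → (∑ z, p₂ z ≤ 1) →
        (∀ z, p z = p₁ z + p₂ z) →
        ambig p₁ + ambig p₂ ≤ ambig p := by
  haveI : NeZero Q := ⟨by omega⟩
  have hbdd : ∀ (f : Fin Q → ℝ), BddAbove (Set.range f) :=
    fun f => (Set.finite_range f).bddAbove
  constructor
  · -- part (i)
    set M : X → ℝ := fun x => ⨆ b, p (x, b) with hM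
    have hpleM : ∀ x b, p (x, b) ≤ M x := fun x b => le_ciSup (hbdd fun b => p (x, b)) b
    have swap : ∀ {α β : Type} [Fintype α] [Fintype β] (f : α → β → ℝ),
        ∑ a : α, ∑ b : β, f a b = ∑ b : β, ∑ a : α, f a b := fun f => Finset.sum_comm
    -- mass conservation
    have h1 : ∀ (x : X) (b : Fin Q), ∑ y : Y, ∑ c : Fin Q, ∑ g : Equiv.Perm (Fin Q),
        (if g b = c then K g x y else 0) = 1 := by
      intro x b
      rw [← hK1 x]
      refine Finset.sum_congr rfl fun y _ => ?_
      rw [Finset.sum_comm]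
      refine Finset.sum_congr rfl fun g _ => ?_
      simp
    have hmass : ∑ y : Y, ∑ c : Fin Q, pushLift K p (y, c)
        = ∑ x : X, ∑ b : Fin Q, p (x, b) := by
      simp only [pushLift]
      have e1 : ∑ y : Y, ∑ c : Fin Q, ∑ x : X, ∑ b : Fin Q,
          p (x, b) * ∑ g : Equiv.Perm (Fin Q), (if g b = c then K g x y else 0)
          = ∑ x : X, ∑ b : Fin Q, ∑ y : Y, ∑ c : Fin Q,
          p (x, b) * ∑ g : Equiv.Perm (Fin Q), (if g b = c then K g x y else 0) := by
        rw [show (∑ y : Y, ∑ c : Fin Q, ∑ x : X, ∑ b : Fin Q,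
            p (x, b) * ∑ g : Equiv.Perm (Fin Q), (if g b = c then K g x y else 0))
            = ∑ y : Y, ∑ x : X, ∑ c : Fin Q, ∑ b : Fin Q,
            p (x, b) * ∑ g : Equiv.Perm (Fin Q), (if g b = c then K g x y else 0) from
          Finset.sum_congr rfl fun y _ => swap _]
        rw [swap]
        refine Finset.sum_congr rfl fun x _ => ?_
        rw [show (∑ y : Y, ∑ c : Fin Q, ∑ b : Fin Q,
            p (x, b) * ∑ g : Equiv.Perm (Fin Q), (if g b = c then K g x y else 0))
            = ∑ y : Y, ∑ b : Fin Q, ∑ c : Fin Q,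
            p (x, b) * ∑ g : Equiv.Perm (Fin Q), (if g b = c then K g x y else 0) from
          Finset.sum_congr rfl fun y _ => swap _]
        exact swap _
      rw [e1]
      refine Finset.sum_congr rfl fun x _ => Finset.sum_congr rfl fun b _ => ?_
      conv_lhs => rw [show (∑ y : Y, ∑ c : Fin Q,
          p (x, b) * ∑ g : Equiv.Perm (Fin Q), (if g b = c then K g x y else 0))
          = p (x, b) * ∑ y : Y, ∑ c : Fin Q, ∑ g : Equiv.Perm (Fin Q),
          (if g b = c then K g x y else 0) from by
        rw [Finset.mul_sum]; exact Finset.sum_congr rfl fun y _ => (Finset.mul_sum _ _ _).symm]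
      rw [h1 x b, mul_one]
    -- sup bound
    have hsup : ∀ y : Y, (⨆ c : Fin Q, pushLift K p (y, c))
        ≤ ∑ x : X, M x * ∑ g : Equiv.Perm (Fin Q), K g x y := by
      intro y
      refine ciSup_le fun c => ?_
      simp only [pushLift]
      refine Finset.sum_le_sum fun x _ => ?_
      have step : ∑ b : Fin Q, p (x, b) * ∑ g : Equiv.Perm (Fin Q),
          (if g b = c then K g x y else 0)
          ≤ ∑ b : Fin Q, M x * ∑ g : Equiv.Perm (Fin Q),
          (if g b = c then K g x y else 0) := by
        refine Finset.sum_le_sum fun b _ => ?_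
        refine mul_le_mul_of_nonneg_right (hpleM x b) ?_
        refine Finset.sum_nonneg fun g _ => ?_
        split <;> simp [hK0]
      refine step.trans (le_of_eq ?_)
      rw [← Finset.mul_sum, swap]
      congr 1
      refine Finset.sum_congr rfl fun g _ => ?_
      simp [Equiv.apply_eq_iff_eq_symm_apply]
    have hsupsum : ∑ y : Y, (⨆ c : Fin Q, pushLift K p (y, c)) ≤ ∑ x : X, M x := by
      refine (Finset.sum_le_sum fun y _ => hsup y).trans (le_of_eq ?_)
      rw [swap]
      refine Finset.sum_congr rfl fun x _ => ?_
      rw [← Finset.mul_sum, hK1 x, mul_one]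
    have e2 : ambig (pushLift K p) = (∑ y : Y, ∑ c : Fin Q, pushLift K p (y, c))
        - ∑ y : Y, ⨆ c : Fin Q, pushLift K p (y, c) := by
      simp [ambig, Finset.sum_sub_distrib]
    have e3 : ambig p = (∑ x : X, ∑ b : Fin Q, p (x, b)) - ∑ x : X, M x := by
      simp [ambig, Finset.sum_sub_distrib, hM]
    rw [e2, e3, hmass]
    linarith
  · intro p₁ p₂ h10 h11 h20 h21 hsum
    simp only [ambig, ← Finset.sum_add_distrib]
    refine Finset.sum_le_sum fun x _ => ?_
    have hs : ∀ b : Fin Q, p (x, b) = p₁ (x, b) + p₂ (x, b) := fun b => hsum (x, b)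
    have hsup : (⨆ b, p (x, b)) ≤ (⨆ b, p₁ (x, b)) + ⨆ b, p₂ (x, b) := by
      refine ciSup_le fun b => ?_
      rw [hs b]
      exact add_le_add (le_ciSup (hbdd fun b => p₁ (x, b)) b) (le_ciSup (hbdd fun b => p₂ (x, b)) b)
    have hsum' : ∑ b : Fin Q, p (x, b) = (∑ b, p₁ (x, b)) + ∑ b, p₂ (x, b) := by
      rw [← Finset.sum_add_distrib]; exact Finset.sum_congr rfl fun b _ => hs b
    rw [hsum']
    linarith
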